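/- (Shell separation for mismatched shapes.) Fix 0 < β₁ < β₀, and for each integer m ≥ 1 let X_m and Y_m be independent random vectors with X_m ~ MGGD(0, I_m, β₀) and Y_m ~ MGGD(0, I_m, β₁) (i.e., their joint law is the product of the two MGGD measures on ℝ^m × ℝ^m). Then for every constant K > 0, P(‖Y_m‖ > K ‖X_m‖) → 1 as m → ∞. -/

import Mathlib

open MeasureTheory Real Filter Topology

/-- The standardised MGGD(0, Iₘ, β) measure on ℝ^m: the measure with Lebesgue density
`[β Γ(m/2) / (π^{m/2} Γ(m/(2β)) 2^{m/(2β)})] exp(−(1/2)‖x‖^{2β})`. -/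
noncomputable def mggdStd (m : ℕ) (β : ℝ) : Measure (EuclideanSpace ℝ (Fin m)) :=
  volume.withDensity fun x => ENNReal.ofReal
    (β * Real.Gamma ((m : ℝ) / 2) /
        (Real.pi ^ ((m : ℝ) / 2) * Real.Gamma ((m : ℝ) / (2 * β)) *
          (2 : ℝ) ^ ((m : ℝ) / (2 * β))) *
      Real.exp (-(1 / 2) * ‖x‖ ^ (2 * β)))

open scoped ENNReal

lemma integrable_exp_neg_rpow_norm {m : ℕ} (hm : 0 < m) {p : ℝ} (hp : 0 < p) :
    Integrable (fun x : EuclideanSpace ℝ (Fin m) => Real.exp (-‖x‖ ^ p)) := by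
  haveI : Nonempty (Fin m) := ⟨⟨0, hm⟩⟩
  by_contra h
  have key := MeasureTheory.measure_unitBall_eq_integral_div_gamma
      (volume : Measure (EuclideanSpace ℝ (Fin m))) hp
  rw [integral_undef h] at key
  simp only [zero_div, ENNReal.ofReal_zero] at key
  exact (Metric.measure_ball_pos volume (0 : EuclideanSpace ℝ (Fin m)) one_pos).ne' key

lemma integrable_exp_neg_mul_rpow_norm {m : ℕ} (hm : 0 < m) {p b : ℝ} (hp : 0 < p) (hb : 0 < b) :
    Integrable (fun x : EuclideanSpace ℝ (Fin m) => Real.exp (-b * ‖x‖ ^ p)) := by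
  have h1 := integrable_exp_neg_rpow_norm hm hp
  have hc : (b ^ p⁻¹ : ℝ) ≠ 0 := by positivity
  have h2 := (integrable_comp_smul_iff volume
      (fun x : EuclideanSpace ℝ (Fin m) => Real.exp (-‖x‖ ^ p)) hc).mpr h1
  refine h2.congr (Filter.Eventually.of_forall fun x => ?_)
  show Real.exp (-‖(b ^ p⁻¹ : ℝ) • x‖ ^ p) = Real.exp (-b * ‖x‖ ^ p)
  rw [norm_smul, Real.norm_eq_abs, abs_of_pos (by positivity : (0:ℝ) < b ^ p⁻¹),
    Real.mul_rpow (by positivity) (norm_nonneg _), ← Real.rpow_mul hb.le,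
    inv_mul_cancel₀ hp.ne', Real.rpow_one, neg_mul]

lemma integral_exp_neg_mul_rpow_norm {m : ℕ} (hm : 0 < m) {p b : ℝ} (hp : 0 < p) (hb : 0 < b) :
    ∫ x : EuclideanSpace ℝ (Fin m), Real.exp (-b * ‖x‖ ^ p) =
      (m : ℝ) * (Real.sqrt π ^ m / Real.Gamma ((m : ℝ) / 2 + 1)) *
        (b ^ (-(m : ℝ) / p) * (1 / p) * Real.Gamma ((m : ℝ) / p)) := by
  haveI : Nonempty (Fin m) := ⟨⟨0, hm⟩⟩
  have h := MeasureTheory.integral_fun_norm_addHaar (volume : Measure (EuclideanSpace ℝ (Fin m)))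
      (fun r : ℝ => Real.exp (-b * r ^ p))
  simp only [finrank_euclideanSpace_fin] at h
  have hinner : ∫ y in Set.Ioi (0:ℝ), y ^ (m - 1) • Real.exp (-b * y ^ p)
      = b ^ (-(m : ℝ) / p) * (1 / p) * Real.Gamma ((m : ℝ) / p) := by
    rw [setIntegral_congr_fun measurableSet_Ioi
        (g := fun y : ℝ => y ^ ((m : ℝ) - 1) * Real.exp (-b * y ^ p)) ?_]
    · rw [integral_rpow_mul_exp_neg_mul_rpow hp (by
        have : (1:ℝ) ≤ (m:ℝ) := by exact_mod_cast hm
        linarith) hb]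
      norm_num
    · intro y hy
      simp only [smul_eq_mul]
      rw [← Real.rpow_natCast y (m-1), Nat.cast_sub hm, Nat.cast_one]
  rw [hinner] at h
  rw [h, measureReal_def, EuclideanSpace.volume_ball, Fintype.card_fin, ENNReal.ofReal_one, one_pow, one_mul,
    ENNReal.toReal_ofReal (by positivity)]
  simp only [nsmul_eq_mul, smul_eq_mul]
  ring

lemma sqrt_pi_pow (m : ℕ) : Real.sqrt π ^ m = π ^ ((m : ℝ) / 2) := by
  rw [Real.sqrt_eq_rpow, ← Real.rpow_natCast (π ^ ((1:ℝ)/2)) m, ← Real.rpow_mul pi_pos.le]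
  congr 1
  ring

lemma const_mul_J {m : ℕ} (hm : 0 < m) {β b : ℝ} (hβ : 0 < β) (hb : 0 < b) :
    (β * Real.Gamma ((m : ℝ) / 2) /
        (π ^ ((m : ℝ) / 2) * Real.Gamma ((m : ℝ) / (2 * β)) * (2:ℝ) ^ ((m : ℝ) / (2 * β)))) *
      ((m : ℝ) * (Real.sqrt π ^ m / Real.Gamma ((m : ℝ) / 2 + 1)) *
        (b ^ (-(m : ℝ) / (2 * β)) * (1 / (2 * β)) * Real.Gamma ((m : ℝ) / (2 * β))))
      = (2 * b) ^ (-(m : ℝ) / (2 * β)) := by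
  have hm' : (0:ℝ) < (m:ℝ) := by exact_mod_cast hm
  have hG1 : 0 < Real.Gamma ((m : ℝ) / 2) := Real.Gamma_pos_of_pos (by positivity)
  have hG2 : 0 < Real.Gamma ((m : ℝ) / (2 * β)) := Real.Gamma_pos_of_pos (by positivity)
  have hpi : (0:ℝ) < π ^ ((m : ℝ) / 2) := Real.rpow_pos_of_pos pi_pos _
  have h2 : (0:ℝ) < (2:ℝ) ^ ((m : ℝ) / (2 * β)) := by positivity
  have hbp : (0:ℝ) < b ^ (-(m : ℝ) / (2 * β)) := Real.rpow_pos_of_pos hb _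
  rw [sqrt_pi_pow, Real.Gamma_add_one (by positivity : ((m:ℝ)/2) ≠ 0),
    Real.mul_rpow (by norm_num) hb.le,
    show (2:ℝ) ^ (-(m:ℝ)/(2*β)) = ((2:ℝ) ^ ((m:ℝ)/(2*β)))⁻¹ by
      rw [neg_div, Real.rpow_neg (by norm_num)]]
  field_simp

lemma key_lintegral {m : ℕ} (hm : 0 < m) {β c : ℝ} (hβ : 0 < β) (hc : c < 1/2) :
    ∫⁻ x, ENNReal.ofReal (Real.exp (c * ‖x‖ ^ (2*β))) ∂(mggdStd m β)
      = ENNReal.ofReal ((1 - 2*c) ^ (-(m:ℝ)/(2*β))) := by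
  have hm' : (0:ℝ) < (m:ℝ) := by exact_mod_cast hm
  set C : ℝ := β * Real.Gamma ((m : ℝ) / 2) /
      (π ^ ((m : ℝ) / 2) * Real.Gamma ((m : ℝ) / (2 * β)) * (2:ℝ) ^ ((m : ℝ) / (2 * β)))
      with hCdef
  have hG1 : 0 < Real.Gamma ((m : ℝ) / 2) := Real.Gamma_pos_of_pos (by positivity)
  have hG2 : 0 < Real.Gamma ((m : ℝ) / (2 * β)) := Real.Gamma_pos_of_pos (by positivity)
  have hC : 0 < C := by
    have hpi : (0:ℝ) < π ^ ((m : ℝ) / 2) := Real.rpow_pos_of_pos pi_pos _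
    have h2 : (0:ℝ) < (2:ℝ) ^ ((m : ℝ) / (2 * β)) := by positivity
    positivity
  have hcont : Continuous fun x : EuclideanSpace ℝ (Fin m) => ‖x‖ ^ (2*β) :=
    continuous_norm.rpow_const (fun x => Or.inr (by positivity))
  have hb : (0:ℝ) < 1/2 - c := by linarith
  have hmeas1 : Measurable fun x : EuclideanSpace ℝ (Fin m) =>
      ENNReal.ofReal (C * Real.exp (-(1 / 2) * ‖x‖ ^ (2 * β))) :=
    ENNReal.measurable_ofReal.comp
      (continuous_const.mul ((continuous_const.mul hcont).rexp)).measurable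
  have hmeas2 : Measurable fun x : EuclideanSpace ℝ (Fin m) =>
      ENNReal.ofReal (Real.exp (c * ‖x‖ ^ (2 * β))) :=
    ENNReal.measurable_ofReal.comp ((continuous_const.mul hcont).rexp).measurable
  rw [mggdStd, lintegral_withDensity_eq_lintegral_mul _ hmeas1 hmeas2]
  simp only [Pi.mul_apply]
  have heq : ∀ x : EuclideanSpace ℝ (Fin m),
      ENNReal.ofReal (C * Real.exp (-(1 / 2) * ‖x‖ ^ (2 * β))) *
        ENNReal.ofReal (Real.exp (c * ‖x‖ ^ (2 * β)))
      = ENNReal.ofReal (C * Real.exp (-(1/2 - c) * ‖x‖ ^ (2 * β))) := by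
    intro x
    rw [← ENNReal.ofReal_mul (by positivity), mul_assoc, ← Real.exp_add]
    ring_nf
  rw [lintegral_congr heq]
  rw [← ofReal_integral_eq_lintegral_ofReal
      ((integrable_exp_neg_mul_rpow_norm hm (by positivity) hb).const_mul C)
      (Filter.Eventually.of_forall fun x => by positivity)]
  rw [integral_const_mul, integral_exp_neg_mul_rpow_norm hm (by positivity) hb]
  rw [hCdef, const_mul_J hm hβ hb]
  congr 2
  ring

lemma isProbabilityMeasure_mggdStd {m : ℕ} (hm : 0 < m) {β : ℝ} (hβ : 0 < β) :
    IsProbabilityMeasure (mggdStd m β) := by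
  constructor
  have h := key_lintegral hm hβ (c := 0) (by norm_num)
  simp only [zero_mul, Real.exp_zero, ENNReal.ofReal_one, lintegral_one, mul_zero, sub_zero,
    Real.one_rpow] at h
  simpa using h

lemma mggd_meas_ge_le {m : ℕ} (hm : 0 < m) {β t : ℝ} (hβ : 0 < β) (ht : 0 ≤ t) :
    mggdStd m β {x | t ≤ ‖x‖} ≤
      ENNReal.ofReal ((2:ℝ) ^ ((m:ℝ)/(2*β)) * Real.exp (-(1/4) * t ^ (2*β))) := by
  have hcont : Continuous fun x : EuclideanSpace ℝ (Fin m) => ‖x‖ ^ (2*β) :=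
    continuous_norm.rpow_const (fun x => Or.inr (by positivity))
  set f : EuclideanSpace ℝ (Fin m) → ℝ≥0∞ :=
    fun x => ENNReal.ofReal (Real.exp ((1/4) * ‖x‖ ^ (2*β))) with hf
  have hfm : AEMeasurable f (mggdStd m β) :=
    (ENNReal.measurable_ofReal.comp ((continuous_const.mul hcont).rexp).measurable).aemeasurable
  have hε0 : ENNReal.ofReal (Real.exp ((1/4) * t ^ (2*β))) ≠ 0 :=
    (ENNReal.ofReal_pos.mpr (Real.exp_pos _)).ne'
  have hsub : {x : EuclideanSpace ℝ (Fin m) | t ≤ ‖x‖} ⊆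
      {x | ENNReal.ofReal (Real.exp ((1/4) * t ^ (2*β))) ≤ f x} := by
    intro x hx
    exact ENNReal.ofReal_le_ofReal (Real.exp_le_exp.mpr (by
      have := Real.rpow_le_rpow ht hx (by positivity : (0:ℝ) ≤ 2*β)
      linarith))
  calc mggdStd m β {x | t ≤ ‖x‖}
      ≤ mggdStd m β {x | ENNReal.ofReal (Real.exp ((1/4) * t ^ (2*β))) ≤ f x} :=
        measure_mono hsub
    _ ≤ (∫⁻ x, f x ∂(mggdStd m β)) / ENNReal.ofReal (Real.exp ((1/4) * t ^ (2*β))) :=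
        meas_ge_le_lintegral_div hfm hε0 ENNReal.ofReal_ne_top
    _ = ENNReal.ofReal ((2:ℝ) ^ ((m:ℝ)/(2*β)) * Real.exp (-(1/4) * t ^ (2*β))) := by
        rw [hf, key_lintegral hm hβ (by norm_num : (1/4:ℝ) < 1/2),
          ← ENNReal.ofReal_div_of_pos (Real.exp_pos _)]
        congr 1
        rw [div_eq_mul_inv, ← Real.exp_neg]
        norm_num
        rw [one_div, Real.inv_rpow (by norm_num : (0:ℝ) ≤ 2), neg_div,
          Real.rpow_neg (by norm_num : (0:ℝ) ≤ 2), inv_inv]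

lemma mggd_meas_lt_le {m : ℕ} (hm : 0 < m) {β t : ℝ} (hβ : 0 < β) (ht : 0 ≤ t) :
    mggdStd m β {x | ‖x‖ < t} ≤
      ENNReal.ofReal ((3/2:ℝ) ^ (-(m:ℝ)/(2*β)) * Real.exp ((1/4) * t ^ (2*β))) := by
  have hcont : Continuous fun x : EuclideanSpace ℝ (Fin m) => ‖x‖ ^ (2*β) :=
    continuous_norm.rpow_const (fun x => Or.inr (by positivity))
  set f : EuclideanSpace ℝ (Fin m) → ℝ≥0∞ :=
    fun x => ENNReal.ofReal (Real.exp (-(1/4) * ‖x‖ ^ (2*β))) with hf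
  have hfm : AEMeasurable f (mggdStd m β) :=
    (ENNReal.measurable_ofReal.comp ((continuous_const.mul hcont).rexp).measurable).aemeasurable
  have hε0 : ENNReal.ofReal (Real.exp (-(1/4) * t ^ (2*β))) ≠ 0 :=
    (ENNReal.ofReal_pos.mpr (Real.exp_pos _)).ne'
  have hsub : {x : EuclideanSpace ℝ (Fin m) | ‖x‖ < t} ⊆
      {x | ENNReal.ofReal (Real.exp (-(1/4) * t ^ (2*β))) ≤ f x} := by
    intro x hx
    exact ENNReal.ofReal_le_ofReal (Real.exp_le_exp.mpr (by
      have := Real.rpow_le_rpow (norm_nonneg x) (le_of_lt hx) (by positivity : (0:ℝ) ≤ 2*β)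
      linarith))
  calc mggdStd m β {x | ‖x‖ < t}
      ≤ mggdStd m β {x | ENNReal.ofReal (Real.exp (-(1/4) * t ^ (2*β))) ≤ f x} :=
        measure_mono hsub
    _ ≤ (∫⁻ x, f x ∂(mggdStd m β)) / ENNReal.ofReal (Real.exp (-(1/4) * t ^ (2*β))) :=
        meas_ge_le_lintegral_div hfm hε0 ENNReal.ofReal_ne_top
    _ = ENNReal.ofReal ((3/2:ℝ) ^ (-(m:ℝ)/(2*β)) * Real.exp ((1/4) * t ^ (2*β))) := by
        rw [hf, key_lintegral hm hβ (by norm_num : (-(1/4):ℝ) < 1/2),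
          ← ENNReal.ofReal_div_of_pos (Real.exp_pos _)]
        congr 1
        rw [div_eq_mul_inv, ← Real.exp_neg]
        norm_num

lemma tendsto_exp_sub_aux {c₁ c₂ p q : ℝ} (hc₂ : 0 < c₂) (hp : 0 < p) (hpq : p < q) :
    Tendsto (fun x : ℝ => Real.exp (c₁ * x ^ p - c₂ * x ^ q)) atTop (𝓝 0) := by
  apply Real.tendsto_exp_atBot.comp
  have h1 : Tendsto (fun x : ℝ => x ^ p) atTop atTop := tendsto_rpow_atTop hp
  have h2 : Tendsto (fun x : ℝ => c₁ - c₂ * x ^ (q - p)) atTop atBot := by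
    apply tendsto_atBot_add_const_left
    have := (tendsto_rpow_atTop (by linarith : 0 < q - p)).const_mul_atTop hc₂
    exact tendsto_neg_atTop_atBot.comp this
  have h3 := h1.atTop_mul_atBot₀ h2
  apply h3.congr'
  filter_upwards [eventually_gt_atTop (0:ℝ)] with x hx
  rw [mul_sub, show x ^ p * (c₂ * x ^ (q - p)) = c₂ * (x ^ p * x ^ (q - p)) by ring,
    ← Real.rpow_add hx]
  ring_nf

/-- Shell separation for mismatched shapes: fix `0 < β₁ < β₀`, and for each
`m` let `Xₘ ~ MGGD(0, Iₘ, β₀)` and `Yₘ ~ MGGD(0, Iₘ, β₁)` be independent (joint law the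
product measure). Then for every `K > 0`, `P(‖Yₘ‖ > K ‖Xₘ‖) → 1` as `m → ∞`. -/
theorem mggd_shell_separation
    (β₀ β₁ : ℝ) (hβ₁ : 0 < β₁) (h : β₁ < β₀) (K : ℝ) (hK : 0 < K) :
    Tendsto (fun m : ℕ =>
        ((mggdStd m β₀).prod (mggdStd m β₁))
          {p : EuclideanSpace ℝ (Fin m) × EuclideanSpace ℝ (Fin m) | K * ‖p.1‖ < ‖p.2‖})
      atTop (𝓝 1) := by
  have hβ₀ : 0 < β₀ := hβ₁.trans h
  set α : ℝ := (1/(2*β₀) + 1/(2*β₁))/2 with hαdef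
  have hltβ : 1/(2*β₀) < 1/(2*β₁) :=
    one_div_lt_one_div_of_lt (by positivity) (by linarith)
  have hα0 : 0 < α := by rw [hαdef]; positivity
  have hα₀ : 1/(2*β₀) < α := by rw [hαdef]; linarith
  have hα₁ : α < 1/(2*β₁) := by rw [hαdef]; linarith
  set t : ℕ → ℝ := fun m => (m:ℝ) ^ α with htdef
  set u : ℕ → ℝ := fun m =>
    (2:ℝ) ^ ((m:ℝ)/(2*β₀)) * Real.exp (-(1/4) * ((t m)/K) ^ (2*β₀)) with hudef
  set v : ℕ → ℝ := fun m =>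
    (3/2:ℝ) ^ (-(m:ℝ)/(2*β₁)) * Real.exp ((1/4) * (t m) ^ (2*β₁)) with hvdef
  -- limit of u
  have hu0 : Tendsto u atTop (𝓝 (0:ℝ)) := by
    have hq : (1:ℝ) < α * (2*β₀) := by
      calc (1:ℝ) = (1/(2*β₀))*(2*β₀) := by field_simp
      _ < α*(2*β₀) := mul_lt_mul_of_pos_right hα₀ (by positivity)
    have hc₂ : (0:ℝ) < (1/4) / K ^ (2*β₀) := by positivity
    have base := (tendsto_exp_sub_aux (c₁ := Real.log 2 / (2*β₀)) hc₂ one_pos hq).comp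
        (tendsto_natCast_atTop_atTop (R := ℝ))
    apply base.congr
    intro m
    simp only [Function.comp_apply, hudef, htdef]
    rw [Real.rpow_one, Real.rpow_def_of_pos (by norm_num : (0:ℝ) < 2), ← Real.exp_add,
      Real.div_rpow (Real.rpow_nonneg (Nat.cast_nonneg m) α) hK.le,
      ← Real.rpow_mul (Nat.cast_nonneg m)]
    congr 1
    ring
  -- limit of v
  have hv0 : Tendsto v atTop (𝓝 (0:ℝ)) := by
    have hp : (0:ℝ) < α * (2*β₁) := by positivity
    have hq : α * (2*β₁) < 1 := by
      calc α*(2*β₁) < (1/(2*β₁))*(2*β₁) := mul_lt_mul_of_pos_right hα₁ (by positivity)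
      _ = 1 := by field_simp
    have hc₂ : (0:ℝ) < Real.log (3/2) / (2*β₁) := by
      have : (0:ℝ) < Real.log (3/2) := Real.log_pos (by norm_num)
      positivity
    have base := (tendsto_exp_sub_aux (c₁ := (1/4:ℝ)) hc₂ hp hq).comp
        (tendsto_natCast_atTop_atTop (R := ℝ))
    apply base.congr
    intro m
    simp only [Function.comp_apply, hvdef, htdef]
    rw [Real.rpow_one, Real.rpow_def_of_pos (by norm_num : (0:ℝ) < 3/2), ← Real.exp_add,
      ← Real.rpow_mul (Nat.cast_nonneg m)]
    congr 1
    ring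
  -- measurability of the event
  have hSmeas : ∀ m : ℕ, MeasurableSet
      {p : EuclideanSpace ℝ (Fin m) × EuclideanSpace ℝ (Fin m) | K * ‖p.1‖ < ‖p.2‖} := by
    intro m
    exact (isOpen_lt (continuous_const.mul (continuous_norm.comp continuous_fst))
      (continuous_norm.comp continuous_snd)).measurableSet
  set w : ℕ → ℝ≥0∞ := fun m => ((mggdStd m β₀).prod (mggdStd m β₁))
      {p : EuclideanSpace ℝ (Fin m) × EuclideanSpace ℝ (Fin m) | K * ‖p.1‖ < ‖p.2‖}ᶜ with hwdef
  have hmain : ∀ m : ℕ, 0 < m →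
      ((mggdStd m β₀).prod (mggdStd m β₁))
        {p : EuclideanSpace ℝ (Fin m) × EuclideanSpace ℝ (Fin m) | K * ‖p.1‖ < ‖p.2‖}
        = 1 - w m ∧
      w m ≤ ENNReal.ofReal (u m) + ENNReal.ofReal (v m) := by
    intro m hm
    haveI h₀ := isProbabilityMeasure_mggdStd hm hβ₀
    haveI h₁ := isProbabilityMeasure_mggdStd hm hβ₁
    constructor
    · have hwm : w m = ((mggdStd m β₀).prod (mggdStd m β₁))
          {p : EuclideanSpace ℝ (Fin m) × EuclideanSpace ℝ (Fin m) | K * ‖p.1‖ < ‖p.2‖}ᶜ := rfl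
      rw [hwm, prob_compl_eq_one_sub (hSmeas m),
        ENNReal.sub_sub_cancel ENNReal.one_ne_top prob_le_one]
    · have hsub : {p : EuclideanSpace ℝ (Fin m) × EuclideanSpace ℝ (Fin m) |
          K * ‖p.1‖ < ‖p.2‖}ᶜ ⊆
          ({x : EuclideanSpace ℝ (Fin m) | t m / K ≤ ‖x‖} ×ˢ Set.univ) ∪
            (Set.univ ×ˢ {y : EuclideanSpace ℝ (Fin m) | ‖y‖ < t m}) := by
        intro p hp
        simp only [Set.mem_compl_iff, Set.mem_setOf_eq, not_lt] at hp
        by_cases hcase : t m / K ≤ ‖p.1‖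
        · exact Or.inl ⟨hcase, trivial⟩
        · refine Or.inr ⟨trivial, ?_⟩
          push_neg at hcase
          calc ‖p.2‖ ≤ K * ‖p.1‖ := hp
          _ < K * (t m / K) := mul_lt_mul_of_pos_left hcase hK
          _ = t m := by field_simp
      have hb := (measure_mono (μ := (mggdStd m β₀).prod (mggdStd m β₁)) hsub).trans
        (measure_union_le _ _)
      rw [Measure.prod_prod, Measure.prod_prod, measure_univ, measure_univ, mul_one,
        one_mul] at hb
      refine hb.trans (add_le_add ?_ ?_)
      · exact mggd_meas_ge_le hm hβ₀ (by positivity)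
      · exact mggd_meas_lt_le hm hβ₁ (Real.rpow_nonneg (Nat.cast_nonneg m) α)
  have hw0 : Tendsto w atTop (𝓝 (0:ℝ≥0∞)) := by
    have hub : Tendsto (fun m : ℕ => ENNReal.ofReal (u m) + ENNReal.ofReal (v m))
        atTop (𝓝 (0:ℝ≥0∞)) := by
      have := (ENNReal.tendsto_ofReal hu0).add (ENNReal.tendsto_ofReal hv0)
      simpa using this
    refine tendsto_of_tendsto_of_tendsto_of_le_of_le' tendsto_const_nhds hub
      (Filter.Eventually.of_forall fun m => zero_le) ?_
    filter_upwards [eventually_gt_atTop 0] with m hm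
    exact (hmain m hm).2
  have h1w : Tendsto (fun m : ℕ => 1 - w m) atTop (𝓝 (1:ℝ≥0∞)) := by
    have hc : Continuous (fun x : ℝ≥0∞ => 1 - x) :=
      ENNReal.continuous_sub_left ENNReal.one_ne_top
    have := (hc.tendsto 0).comp hw0
    simpa [Function.comp_def] using this
  apply h1w.congr'
  filter_upwards [eventually_gt_atTop 0] with m hm
  exact ((hmain m hm).1).symm
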